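/- arXiv:2211.07154 — 2 statements merged into one kernel-verified Lean document; each statement's English description precedes it below -/
import Mathlib

section
/- Let I = (G, {W_1, …, W_t}, k) be a yes-instance of Partitioned Subset Treewidth that is maximally merged and has t ≥ 2 terminal cliques. Then I has at least two potential forget-cliques. -/
open SimpleGraph

variable {V ι : Type*}

/-- The torso of `G` on a vertex set `X`: vertices `u ≠ v` of `X` are adjacent iff there is a
`u`–`v` walk in `G` all of whose internal vertices lie outside `X`. -/
def torsoGraph (G : SimpleGraph V) (X : Set V) : SimpleGraph V where
  Adj u v := u ≠ v ∧ u ∈ X ∧ v ∈ X ∧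
    ∃ p : G.Walk u v, ∀ w ∈ p.support, w = u ∨ w = v ∨ w ∉ X
  symm := ⟨by
    rintro u v ⟨hne, hu, hv, p, hp⟩
    refine ⟨hne.symm, hv, hu, p.reverse, ?_⟩
    intro w hw
    rw [SimpleGraph.Walk.support_reverse, List.mem_reverse] at hw
    rcases hp w hw with h | h | h
    · exact Or.inr (Or.inl h)
    · exact Or.inl h
    · exact Or.inr (Or.inr h)⟩
  loopless := ⟨fun _ h => h.1 rfl⟩

/-- `(T, bag)` is a tree decomposition of `G`. -/
structure IsTreeDecomp (G : SimpleGraph V) (T : SimpleGraph ι) (bag : ι → Set V) : Prop where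
  tree : T.IsTree
  mem_bag : ∀ v : V, ∃ t, v ∈ bag t
  edge_bag : ∀ ⦃u v : V⦄, G.Adj u v → ∃ t, u ∈ bag t ∧ v ∈ bag t
  conn : ∀ v : V, (T.induce {t | v ∈ bag t}).Connected

/-- `(X, (T, bag))` is a torso tree decomposition in `G`, i.e. `(T, bag)` is a tree
decomposition of `torsoGraph G X`. -/
structure IsTorsoTreeDecomp (G : SimpleGraph V) (X : Set V)
    (T : SimpleGraph ι) (bag : ι → Set V) : Prop where
  tree : T.IsTree
  bag_subset : ∀ t, bag t ⊆ X
  mem_bag : ∀ v ∈ X, ∃ t, v ∈ bag t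
  edge_bag : ∀ ⦃u v : V⦄, (torsoGraph G X).Adj u v → ∃ t, u ∈ bag t ∧ v ∈ bag t
  conn : ∀ v ∈ X, (T.induce {t | v ∈ bag t}).Connected

/-- `G` has treewidth at most `k`. -/
def HasTreewidthAtMost (G : SimpleGraph V) (k : ℕ) : Prop :=
  ∃ (n : ℕ) (T : SimpleGraph (Fin n)) (bag : Fin n → Set V),
    IsTreeDecomp G T bag ∧ ∀ t, (bag t).ncard ≤ k + 1

/-- `S` is an `(X, Y)`-separator in `G`: every walk from `X` to `Y` meets `S`. -/
def IsSep (G : SimpleGraph V) (X Y S : Set V) : Prop :=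
  ∀ ⦃x y : V⦄, x ∈ X → y ∈ Y → ∀ p : G.Walk x y, ∃ s ∈ S, s ∈ p.support

/-- The maximum number of vertex-disjoint `X`–`Y` paths; by Menger's theorem this equals the
minimum size of an `(X, Y)`-separator, which is how we define it. -/
noncomputable def flowG (G : SimpleGraph V) (X Y : Set V) : ℕ :=
  sInf (Set.ncard '' {S : Set V | IsSep G X Y S})

/-- `X` is linked into `Y`. -/
def LinkedInto (G : SimpleGraph V) (X Y : Set V) : Prop :=
  flowG G X Y = X.ncard

/-- `X` is strictly linked into `Y`. -/
def StrictlyLinkedInto (G : SimpleGraph V) (X Y : Set V) : Prop :=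
  LinkedInto G X Y ∧
    ∀ S : Set V, IsSep G X Y S → S.ncard = X.ncard → S = X ∨ S = Y

/-- `R_G(X, S)`: the set of vertices of `G \ S` reachable from `X \ S`. -/
def reachG (G : SimpleGraph V) (X S : Set V) : Set V :=
  {v | ∃ x ∈ X, x ∉ S ∧ ∃ p : G.Walk x v, ∀ w ∈ p.support, w ∉ S}

/-- `S` is a minimal `(X, Y)`-separator. -/
def IsMinimalSep (G : SimpleGraph V) (X Y S : Set V) : Prop :=
  IsSep G X Y S ∧ ∀ S' : Set V, S' ⊂ S → ¬ IsSep G X Y S'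

/-- `S` is an important `(A, B)`-separator. -/
def IsImportantSep (G : SimpleGraph V) (A B S : Set V) : Prop :=
  IsMinimalSep G A B S ∧
    ¬ ∃ S' : Set V, IsSep G A B S' ∧ S'.ncard ≤ S.ncard ∧ reachG G A S ⊂ reachG G A S'

/-- The important `(A, B)`-separator `S'` dominates the `(A, B)`-separator `S`. -/
def DominatesSep (G : SimpleGraph V) (A B S S' : Set V) : Prop :=
  IsImportantSep G A B S' ∧ S'.ncard ≤ S.ncard ∧ reachG G A S ⊆ reachG G A S'

/-- `(A, S, B)` is a separation of `G`. -/
structure IsSeparation (G : SimpleGraph V) (A S B : Set V) : Prop where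
  disjoint_AS : Disjoint A S
  disjoint_AB : Disjoint A B
  disjoint_SB : Disjoint S B
  union_eq : A ∪ S ∪ B = Set.univ
  no_adj : ∀ ⦃a b : V⦄, a ∈ A → b ∈ B → ¬ G.Adj a b

open Classical in
/-- The flow potential `flp_G(X, Y)`. -/
noncomputable def flpG (G : SimpleGraph V) (X Y : Set V) : ℕ :=
  if X = Set.univ then X.ncard
  else sInf {n : ℕ | ∃ A S B : Set V, IsSeparation G A S B ∧
    X ⊆ A ∪ S ∧ Y ⊆ B ∪ S ∧ B.Nonempty ∧ S.ncard = n}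

/-- The graph consisting of a clique on `S` (and no other edges). -/
def cliqueOn (S : Set V) : SimpleGraph V where
  Adj u v := u ≠ v ∧ u ∈ S ∧ v ∈ S
  symm := ⟨fun _ _ ⟨h, hu, hv⟩ => ⟨h.symm, hv, hu⟩⟩
  loopless := ⟨fun _ h => h.1 rfl⟩

/-- `G ⊗ S`: the graph obtained from `G` by making `S` a clique. -/
def addCliqueG (G : SimpleGraph V) (S : Set V) : SimpleGraph V := G ⊔ cliqueOn S

/-- `(G, Ws, k)` is an instance of Partitioned Subset Treewidth: `Ws` is a finite nonempty
family of terminal cliques, `k ≥ 1`, each terminal clique being a clique of `G` of size at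
most `k + 1`. -/
def IsPSTWInstance (G : SimpleGraph V) (Ws : Set (Set V)) (k : ℕ) : Prop :=
  Ws.Finite ∧ Ws.Nonempty ∧ 1 ≤ k ∧ ∀ W ∈ Ws, G.IsClique W ∧ W.ncard ≤ k + 1

/-- `(X, (T, bag))` is a solution of the instance `(G, Ws, k)`. -/
def IsSolutionTD (G : SimpleGraph V) (Ws : Set (Set V)) (k : ℕ)
    (X : Set V) (T : SimpleGraph ι) (bag : ι → Set V) : Prop :=
  IsTorsoTreeDecomp G X T bag ∧ ⋃₀ Ws ⊆ X ∧ ∀ t, (bag t).ncard ≤ k + 1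

/-- The instance `(G, Ws, k)` is a yes-instance. -/
def IsYesInstance (G : SimpleGraph V) (Ws : Set (Set V)) (k : ℕ) : Prop :=
  ∃ (κ : Type) (T : SimpleGraph κ) (bag : κ → Set V) (X : Set V),
    IsSolutionTD G Ws k X T bag

/-- `W̄_I(W)`: the union of the terminal cliques other than `W`. -/
def otherUnion (Ws : Set (Set V)) (W : Set V) : Set V := ⋃₀ (Ws \ {W})

/-- `flp_I(W) = flp_G(W, W̄_I(W))`. -/
noncomputable def flpInst (G : SimpleGraph V) (Ws : Set (Set V)) (W : Set V) : ℕ :=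
  flpG G W (otherUnion Ws W)

/-- `(A, S, B)` is a safe separation of the instance `(G, Ws, k)`. -/
def IsSafeSeparation (G : SimpleGraph V) (Ws : Set (Set V)) (A S B : Set V) : Prop :=
  IsSeparation G A S B ∧ A.Nonempty ∧ B.Nonempty ∧
    ∃ Wa ∈ Ws, ∃ Wb ∈ Ws,
      LinkedInto G S ((A ∪ S) ∩ Wa) ∧ LinkedInto G S ((B ∪ S) ∩ Wb)

/-- `Ws ◁ (A, S)`: remove the terminal cliques not meeting `A`, then insert `S` if no superset
of `S` is present. -/
def restrictCliques (Ws : Set (Set V)) (A S : Set V) : Set (Set V) :=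
  {W ∈ Ws | (W ∩ A).Nonempty} ∪
    {W | W = S ∧ ¬ ∃ W' ∈ Ws, (W' ∩ A).Nonempty ∧ S ⊆ W'}

/-- `G ◁ (A, S) = G[A ∪ S] ⊗ S`, as a graph on the vertex set `A ∪ S`. -/
def restrictGraph (G : SimpleGraph V) (A S : Set V) : SimpleGraph ↥(A ∪ S) :=
  addCliqueG (G.induce (A ∪ S)) (Subtype.val ⁻¹' S)

/-- The terminal cliques of `I ◁ (A, S)`, viewed as subsets of the vertex set `A ∪ S`. -/
def restrictSets (Ws : Set (Set V)) (A S : Set V) : Set (Set ↥(A ∪ S)) :=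
  (fun W => Subtype.val ⁻¹' W) '' restrictCliques Ws A S

/-- The terminal cliques of `I × (Wi, Wj)`. -/
def mergeCliques (Ws : Set (Set V)) (Wi Wj : Set V) : Set (Set V) :=
  insert (Wi ∪ Wj) (Ws \ {Wi, Wj})

/-- The terminal cliques of `I + (W, ·)`, replacing `W` by `W'`. -/
def replaceClique (Ws : Set (Set V)) (W W' : Set V) : Set (Set V) :=
  insert W' (Ws \ {W})

/-- The instance `(G, Ws, k)` is maximally merged. -/
def MaximallyMerged (G : SimpleGraph V) (Ws : Set (Set V)) (k : ℕ) : Prop :=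
  ∀ Wi ∈ Ws, ∀ Wj ∈ Ws, Wi ≠ Wj → (Wi ∪ Wj).ncard ≤ k + 1 →
    ¬ IsYesInstance (addCliqueG G (Wi ∪ Wj)) (mergeCliques Ws Wi Wj) k

/-- `Wi` is a potential forget-clique of the instance `(G, Ws, k)`. -/
def IsPotentialForgetClique (G : SimpleGraph V) (Ws : Set (Set V)) (k : ℕ)
    (Wi : Set V) : Prop :=
  ∃ (κ : Type) (T : SimpleGraph κ) (bag : κ → Set V) (X : Set V),
    IsSolutionTD G Ws k X T bag ∧
    ∃ l p : κ, T.Adj l p ∧ (∀ q, T.Adj l q → q = p) ∧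
      Wi ⊆ bag l ∧ ∃ w ∈ Wi \ otherUnion Ws Wi, bag p = bag l \ {w}

/-- The disjoint union of two trees together with one extra edge between `a` and `b`. -/
def glueTrees {ι₁ ι₂ : Type*} (T₁ : SimpleGraph ι₁) (T₂ : SimpleGraph ι₂)
    (a : ι₁) (b : ι₂) : SimpleGraph (ι₁ ⊕ ι₂) where
  Adj x y :=
    (∃ u v, T₁.Adj u v ∧ x = Sum.inl u ∧ y = Sum.inl v) ∨
    (∃ u v, T₂.Adj u v ∧ x = Sum.inr u ∧ y = Sum.inr v) ∨
    (x = Sum.inl a ∧ y = Sum.inr b) ∨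
    (x = Sum.inr b ∧ y = Sum.inl a)
  symm := ⟨by
    rintro x y (⟨u, v, h, rfl, rfl⟩ | ⟨u, v, h, rfl, rfl⟩ | ⟨rfl, rfl⟩ | ⟨rfl, rfl⟩)
    · exact Or.inl ⟨v, u, h.symm, rfl, rfl⟩
    · exact Or.inr (Or.inl ⟨v, u, h.symm, rfl, rfl⟩)
    · exact Or.inr (Or.inr (Or.inr ⟨rfl, rfl⟩))
    · exact Or.inr (Or.inr (Or.inl ⟨rfl, rfl⟩))⟩
  loopless := ⟨by
    rintro x (⟨u, v, h, rfl, he⟩ | ⟨u, v, h, rfl, he⟩ | ⟨rfl, he⟩ | ⟨rfl, he⟩)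
    · exact h.ne (Sum.inl.inj he)
    · exact h.ne (Sum.inr.inj he)
    · exact Sum.inl_ne_inr he
    · exact Sum.inr_ne_inl he⟩

/-- The sum of the weights `d` over the set `S`. -/
noncomputable def setSum [Finite V] (d : V → ℕ) (S : Set V) : ℕ :=
  ∑ v ∈ S.toFinite.toFinset, d v

set_option linter.unusedSectionVars false
set_option maxHeartbeats 1000000
section TreeLemmas

variable {κ : Type*} [DecidableEq κ] {T : SimpleGraph κ}

/-- Inclusion homomorphism from an induced subgraph. -/
def inclHom (T : SimpleGraph κ) (A : Set κ) : T.induce A →g T :=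
  ⟨Subtype.val, fun {_ _} h => h⟩

lemma exists_walk_in_set {A : Set κ} (hA : (T.induce A).Connected) {x y : κ}
    (hx : x ∈ A) (hy : y ∈ A) :
    ∃ p : T.Walk x y, ∀ z ∈ p.support, z ∈ A := by
  obtain ⟨w⟩ := hA.preconnected ⟨x, hx⟩ ⟨y, hy⟩
  refine ⟨w.map (inclHom T A), ?_⟩
  intro z hz
  have hz2 : z ∈ (w.map (inclHom T A)).support := hz
  rw [Walk.support_map, List.mem_map] at hz2
  obtain ⟨⟨z', hz'⟩, _, rfl⟩ := hz2
  exact hz'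

lemma isTree_length_eq_dist (hT : T.IsTree) {x y : κ} (p : T.Walk x y) (hp : p.IsPath) :
    p.length = T.dist x y := by
  refine le_antisymm ?_ (SimpleGraph.dist_le p)
  obtain ⟨q, hq⟩ := (hT.isConnected.preconnected x y).exists_walk_length_eq_dist
  have hpq : p = q.bypass :=
    congrArg Subtype.val (hT.IsAcyclic.path_unique ⟨p, hp⟩ ⟨q.bypass, q.bypass_isPath⟩)
  rw [hpq, ← hq]
  exact q.length_bypass_le

lemma dist_add_dist_of_mem_path (hT : T.IsTree) {x y c : κ} (p : T.Walk x y)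
    (hp : p.IsPath) (hc : c ∈ p.support) :
    T.dist x c + T.dist c y = T.dist x y := by
  rw [← isTree_length_eq_dist hT p hp,
      ← isTree_length_eq_dist hT (p.takeUntil c hc) (hp.takeUntil hc),
      ← isTree_length_eq_dist hT (p.dropUntil c hc) (hp.dropUntil hc),
      ← Walk.length_append, Walk.take_spec]

lemma path_support_subset (hT : T.IsTree) {A : Set κ} (hA : (T.induce A).Connected)
    {x y : κ} (hx : x ∈ A) (hy : y ∈ A) (p : T.Walk x y) (hp : p.IsPath) :
    ∀ z ∈ p.support, z ∈ A := by
  obtain ⟨q, hq⟩ := exists_walk_in_set hA hx hy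
  have hpq : p = q.bypass :=
    congrArg Subtype.val (hT.IsAcyclic.path_unique ⟨p, hp⟩ ⟨q.bypass, q.bypass_isPath⟩)
  intro z hz
  exact hq z (q.support_bypass_subset (hpq ▸ hz))

lemma gate_lemma (hT : T.IsTree) {A : Set κ} (hA : (T.induce A).Connected)
    {t0 g : κ} (hg : g ∈ A) (hmin : ∀ a ∈ A, T.dist t0 g ≤ T.dist t0 a)
    {z : κ} (hz : z ∈ A) :
    ∃ p : T.Walk t0 z, p.IsPath ∧ g ∈ p.support ∧
      T.dist t0 z = T.dist t0 g + T.dist g z := by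
  obtain ⟨q1, _⟩ := (hT.isConnected.preconnected t0 g).exists_walk_length_eq_dist
  obtain ⟨q2, hq2A⟩ := exists_walk_in_set hA hg hz
  have hP1p : q1.bypass.IsPath := q1.bypass_isPath
  have hP2p : q2.bypass.IsPath := q2.bypass_isPath
  set P1 : T.Walk t0 g := q1.bypass with hP1
  set P2 : T.Walk g z := q2.bypass with hP2
  have hP2A : ∀ w ∈ P2.support, w ∈ A := fun w hw => hq2A w (q2.support_bypass_subset hw)
  have hdisj : ∀ c, c ∈ P1.support → c ∈ P2.support.tail → False := by
    intro c hc1 hc2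
    have hcA : c ∈ A := hP2A c (List.mem_of_mem_tail hc2)
    have hcg : c ≠ g := by
      intro h
      subst h
      have := hP2p.support_nodup
      rw [P2.support_eq_cons] at this
      exact (List.nodup_cons.mp this).1 hc2
    have h1 : T.dist t0 c + T.dist c g = T.dist t0 g :=
      dist_add_dist_of_mem_path hT P1 hP1p hc1
    have h2 : T.dist t0 g ≤ T.dist t0 c := hmin c hcA
    have h3 : T.dist c g = 0 := by omega
    exact hcg ((hT.isConnected.dist_eq_zero_iff).mp h3)
  have hPp : (P1.append P2).IsPath := by
    rw [Walk.isPath_def, Walk.support_append]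
    refine List.Nodup.append hP1p.support_nodup ?_ hdisj
    have := hP2p.support_nodup
    rw [P2.support_eq_cons] at this
    exact (List.nodup_cons.mp this).2
  refine ⟨P1.append P2, hPp, ?_, ?_⟩
  · rw [Walk.mem_support_append_iff]
    exact Or.inl P1.end_mem_support
  · rw [← isTree_length_eq_dist hT _ hPp, Walk.length_append,
      isTree_length_eq_dist hT P1 hP1p, isTree_length_eq_dist hT P2 hP2p]

lemma gate_mem (hT : T.IsTree) {A B : Set κ}
    (hA : (T.induce A).Connected) (hB : (T.induce B).Connected)
    {t0 gA gB t1 : κ}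
    (hgA : gA ∈ A) (hminA : ∀ a ∈ A, T.dist t0 gA ≤ T.dist t0 a)
    (hgB : gB ∈ B) (hminB : ∀ b ∈ B, T.dist t0 gB ≤ T.dist t0 b)
    (ht1A : t1 ∈ A) (ht1B : t1 ∈ B)
    (hle : T.dist t0 gB ≤ T.dist t0 gA) :
    gA ∈ B := by
  obtain ⟨p, hp, hgAp, _⟩ := gate_lemma hT hA hgA hminA ht1A
  obtain ⟨q, hq, hgBq, _⟩ := gate_lemma hT hB hgB hminB ht1B
  have hpq : p = q :=
    congrArg Subtype.val (hT.IsAcyclic.path_unique ⟨p, hp⟩ ⟨q, hq⟩)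
  subst hpq
  have hsplit : gA ∈ (p.takeUntil gB hgBq).support ∨ gA ∈ (p.dropUntil gB hgBq).support := by
    rw [← Walk.mem_support_append_iff, Walk.take_spec]
    exact hgAp
  rcases hsplit with h | h
  · have h1 : T.dist t0 gA + T.dist gA gB = T.dist t0 gB :=
      dist_add_dist_of_mem_path hT _ (hp.takeUntil hgBq) h
    have h3 : T.dist gA gB = 0 := by omega
    have : gA = gB := (hT.isConnected.dist_eq_zero_iff).mp h3
    exact this ▸ hgB
  · exact path_support_subset hT hB hgB ht1B _ (hp.dropUntil hgBq) gA h

end TreeLemmas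
section Torso
variable {V : Type*} [DecidableEq V] {G : SimpleGraph V} {X : Set V}

lemma torso_adj_of_adj {u v : V} (hu : u ∈ X) (hv : v ∈ X) (h : G.Adj u v) :
    (torsoGraph G X).Adj u v := by
  refine ⟨h.ne, hu, hv, h.toWalk, ?_⟩
  intro w hw
  simp only [Adj.toWalk, Walk.support_cons, Walk.support_nil, List.mem_cons,
    List.mem_singleton, List.not_mem_nil, or_false] at hw
  tauto

lemma torso_adj_path {u v : V} (h : (torsoGraph G X).Adj u v) :
    ∃ p : G.Walk u v, p.IsPath ∧ ∀ w ∈ p.support, w = u ∨ w = v ∨ w ∉ X := by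
  obtain ⟨hne, hu, hv, p, hp⟩ := h
  exact ⟨p.bypass, p.bypass_isPath, fun w hw => hp w (p.support_bypass_subset hw)⟩

lemma torso_delete {x u v : V} (hx : x ∈ X)
    (h : (torsoGraph G (X \ {x})).Adj u v) :
    (torsoGraph G X).Adj u v ∨
      ((torsoGraph G X).Adj u x ∧ (torsoGraph G X).Adj v x) := by
  obtain ⟨p, hp, hsupp⟩ := torso_adj_path h
  obtain ⟨hne, hu, hv, -⟩ := h
  have hux : u ≠ x := fun h' => hu.2 h'
  have hvx : v ≠ x := fun h' => hv.2 h'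
  by_cases hxp : x ∈ p.support
  · right
    have hsplit := p.take_spec hxp
    have hnodup : ((p.takeUntil x hxp).support ++ (p.dropUntil x hxp).support.tail).Nodup := by
      rw [← Walk.support_append, hsplit]
      exact hp.support_nodup
    have hdisj := (List.nodup_append.mp hnodup).2.2
    have hvtail : v ∈ (p.dropUntil x hxp).support.tail := by
      have hvend : v ∈ (p.dropUntil x hxp).support := Walk.end_mem_support _
      rw [Walk.support_eq_cons] at hvend
      rcases List.mem_cons.mp hvend with h1 | h1
      · exact absurd h1 hvx
      · exact h1
    have hvnot : v ∉ (p.takeUntil x hxp).support := fun hmem => hdisj v hmem v hvtail rfl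
    have hustart : u ∈ (p.takeUntil x hxp).support := Walk.start_mem_support _
    have hunot : u ∉ (p.dropUntil x hxp).support := by
      intro hmem
      rw [Walk.support_eq_cons] at hmem
      rcases List.mem_cons.mp hmem with h1 | h1
      · exact hux h1
      · exact hdisj u hustart u h1 rfl
    constructor
    · refine ⟨hux, hu.1, hx, p.takeUntil x hxp, ?_⟩
      intro w hw
      have hwp : w ∈ p.support := p.support_takeUntil_subset hxp hw
      rcases hsupp w hwp with h1 | h1 | h1
      · exact Or.inl h1
      · exact absurd (h1 ▸ hw) hvnot
      · rcases Classical.em (w = x) with h2 | h2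
        · exact Or.inr (Or.inl h2)
        · exact Or.inr (Or.inr (fun hwX => h1 ⟨hwX, h2⟩))
    · refine ⟨hvx, hv.1, hx, (p.dropUntil x hxp).reverse, ?_⟩
      intro w hw
      rw [Walk.support_reverse, List.mem_reverse] at hw
      have hwp : w ∈ p.support := p.support_dropUntil_subset hxp hw
      rcases hsupp w hwp with h1 | h1 | h1
      · exact absurd (h1 ▸ hw) hunot
      · exact Or.inl h1
      · rcases Classical.em (w = x) with h2 | h2
        · exact Or.inr (Or.inl h2)
        · exact Or.inr (Or.inr (fun hwX => h1 ⟨hwX, h2⟩))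
  · left
    refine ⟨hne, hu.1, hv.1, p, ?_⟩
    intro w hw
    rcases hsupp w hw with h1 | h1 | h1
    · exact Or.inl h1
    · exact Or.inr (Or.inl h1)
    · refine Or.inr (Or.inr (fun hwX => h1 ⟨hwX, fun h2 => hxp (h2 ▸ hw)⟩))

lemma sup_walk_cases {H : SimpleGraph V} {a b : V} (p : (G ⊔ H).Walk a b) :
    (∃ q : G.Walk a b, q.support = p.support) ∨
      ∃ x y, x ∈ p.support ∧ y ∈ p.support ∧ H.Adj x y := by
  induction p with
  | nil => exact Or.inl ⟨Walk.nil, rfl⟩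
  | cons h p ih =>
    rcases h with hG | hH
    · rcases ih with ⟨q, hq⟩ | ⟨x, y, hx, hy, hxy⟩
      · exact Or.inl ⟨Walk.cons hG q, by simp [hq]⟩
      · exact Or.inr ⟨x, y, by simp [hx], by simp [hy], hxy⟩
    · exact Or.inr ⟨_, _, by simp, by simp, hH⟩

end Torso
section AddLeaf
variable {κ : Type*}

/-- The graph `T` together with one new pendant vertex attached to `s`. -/
def addLeaf (T : SimpleGraph κ) (s : κ) : SimpleGraph (Option κ) where
  Adj x y := (∃ a b, T.Adj a b ∧ x = some a ∧ y = some b) ∨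
    (x = none ∧ y = some s) ∨ (x = some s ∧ y = none)
  symm := ⟨by
    rintro x y (⟨a, b, h, rfl, rfl⟩ | ⟨rfl, rfl⟩ | ⟨rfl, rfl⟩)
    · exact Or.inl ⟨b, a, h.symm, rfl, rfl⟩
    · exact Or.inr (Or.inr ⟨rfl, rfl⟩)
    · exact Or.inr (Or.inl ⟨rfl, rfl⟩)⟩
  loopless := ⟨by
    rintro x (⟨a, b, h, rfl, he⟩ | ⟨rfl, he⟩ | ⟨rfl, he⟩)
    · exact h.ne (Option.some.inj he)
    · exact nomatch he
    · exact nomatch he⟩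

variable {T : SimpleGraph κ} {s : κ}

/-- The natural embedding of `T` into `addLeaf T s`. -/
def liftHom (T : SimpleGraph κ) (s : κ) : T →g addLeaf T s :=
  ⟨some, fun {a b} h => Or.inl ⟨a, b, h, rfl, rfl⟩⟩

lemma addLeaf_adj_none_left {y : Option κ} (h : (addLeaf T s).Adj none y) : y = some s := by
  rcases h with ⟨a, b, _, h1, _⟩ | ⟨_, h2⟩ | ⟨h1, _⟩
  · exact nomatch h1
  · exact h2
  · exact nomatch h1

lemma addLeaf_adj_none_right {x : Option κ} (h : (addLeaf T s).Adj x none) : x = some s :=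
  addLeaf_adj_none_left h.symm

lemma addLeaf_adj_some {a b : κ} (h : (addLeaf T s).Adj (some a) (some b)) : T.Adj a b := by
  rcases h with ⟨a', b', h', h1, h2⟩ | ⟨h1, _⟩ | ⟨_, h2⟩
  · rw [Option.some.inj h1, Option.some.inj h2]; exact h'
  · exact nomatch h1
  · exact nomatch h2

lemma edge_to_none : ∀ {a b : Option κ} (q : (addLeaf T s).Walk a b), a ≠ none → b = none →
    s(some s, none) ∈ q.edges := by
  intro a b q
  induction q with
  | nil => intro h hb; exact absurd hb h
  | @cons u c w h p ih =>
    intro _ hw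
    subst hw
    by_cases hc : c = none
    · subst hc
      have hu : u = some s := addLeaf_adj_none_right h
      subst hu
      simp [Walk.edges_cons]
    · exact List.mem_cons_of_mem _ (ih hc rfl)

lemma proj_walk : ∀ {o₁ o₂ : Option κ} (p : (addLeaf T s).Walk o₁ o₂),
    (∀ z ∈ p.support, z ≠ none) → ∀ {x y : κ} (h₁ : o₁ = some x) (h₂ : o₂ = some y),
    ∃ q : T.Walk x y, q.map (liftHom T s) = p.copy h₁ h₂ := by
  intro o₁ o₂ p
  induction p with
  | nil =>
    intro _ x y h₁ h₂
    subst h₁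
    obtain rfl := Option.some.inj h₂
    exact ⟨Walk.nil, rfl⟩
  | @cons u c w h p ih =>
    intro hn x y h₁ h₂
    subst h₁
    have hcnone : c ≠ none := hn c (by simp)
    obtain ⟨c', rfl⟩ := Option.ne_none_iff_exists'.mp hcnone
    have hT' : T.Adj x c' := addLeaf_adj_some h
    obtain ⟨q, hq⟩ := ih (fun z hz => hn z (by simp [hz])) rfl h₂
    refine ⟨Walk.cons hT' q, ?_⟩
    rw [Walk.copy_cons]
    rw [Walk.map_cons, hq]
    rfl

lemma addLeaf_isTree (hT : T.IsTree) (s : κ) : (addLeaf T s).IsTree := by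
  have key : ∀ z : Option κ, (addLeaf T s).Reachable (some s) z := by
    intro z
    match z with
    | none =>
      have hadj : (addLeaf T s).Adj (some s) none := Or.inr (Or.inr ⟨rfl, rfl⟩)
      exact hadj.reachable
    | some a => exact Reachable.map (liftHom T s) (hT.isConnected.preconnected s a)
  constructor
  · rw [connected_iff]
    exact ⟨fun x y => ((key x).symm.trans (key y)), ⟨none⟩⟩
  · intro v c hc
    classical
    by_cases hn : (none : Option κ) ∈ c.support
    · have hc' := hc.rotate hn
      have hdup : ¬ (c.rotate none hn).edges.Nodup := by
        generalize c.rotate none hn = c' at *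
        match c', hc' with
        | Walk.nil, hc' => exact absurd rfl hc'.ne_nil
        | Walk.cons h p, hc' =>
          have h1 := addLeaf_adj_none_left h
          subst h1
          have h2 : s(some s, none) ∈ p.edges := edge_to_none p (Option.some_ne_none s) rfl
          rw [Walk.edges_cons, List.nodup_cons]
          intro h3
          exact h3.1 (by rw [Sym2.eq_swap] at h2; exact h2)
      exact hdup hc'.isCircuit.isTrail.edges_nodup
    · have hv : v ≠ none := fun e => hn (e ▸ c.start_mem_support)
      obtain ⟨a, rfl⟩ := Option.ne_none_iff_exists'.mp hv
      obtain ⟨q, hq⟩ := proj_walk c (fun z hz e => hn (e ▸ hz)) rfl rfl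
      rw [Walk.copy_rfl_rfl] at hq
      have hqc : q.IsCycle := by
        have hinj : Function.Injective ⇑(liftHom T s) := fun a b h => Option.some.inj h
        rw [← Walk.map_isCycle_iff_of_injective hinj]
        exact hq ▸ hc
      exact hT.IsAcyclic q hqc

lemma addLeaf_induce_connected {A : Set κ} (hA : (T.induce A).Connected)
    {B : Set (Option κ)}
    (hB : ∀ o, o ∈ B ↔ (∃ a ∈ A, o = some a) ∨ (o = none ∧ s ∈ A)) :
    ((addLeaf T s).induce B).Connected := by
  have hmemB : ∀ a ∈ A, some a ∈ B := fun a ha => (hB _).mpr (Or.inl ⟨a, ha, rfl⟩)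
  obtain ⟨⟨a0, ha0⟩⟩ := hA.nonempty
  let hom : T.induce A →g (addLeaf T s).induce B :=
    ⟨fun z => ⟨some z.1, hmemB _ z.2⟩, fun {z w} h => Or.inl ⟨z.1, w.1, h, rfl, rfl⟩⟩
  have reach_some : ∀ (a : κ) (ha : a ∈ A),
      ((addLeaf T s).induce B).Reachable ⟨some a, hmemB a ha⟩ ⟨some a0, hmemB a0 ha0⟩ :=
    fun a ha => Reachable.map hom (hA.preconnected ⟨a, ha⟩ ⟨a0, ha0⟩)
  have reach0 : ∀ x : B, ((addLeaf T s).induce B).Reachable x ⟨some a0, hmemB a0 ha0⟩ := by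
    rintro ⟨o, ho⟩
    rcases (hB o).mp ho with ⟨a, ha, rfl⟩ | ⟨rfl, hs⟩
    · exact reach_some a ha
    · have hadj : ((addLeaf T s).induce B).Adj ⟨none, ho⟩ ⟨some s, hmemB s hs⟩ :=
        Or.inr (Or.inl ⟨rfl, rfl⟩)
      exact hadj.reachable.trans (reach_some s hs)
  rw [connected_iff]
  exact ⟨fun x y => (reach0 x).trans (reach0 y).symm, ⟨⟨some a0, hmemB a0 ha0⟩⟩⟩

end AddLeaf

section Main
variable {V : Type} [Fintype V]

lemma merged_solution {κ : Type} {G : SimpleGraph V} {Ws : Set (Set V)} {k : ℕ}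
    {X : Set V} {T : SimpleGraph κ} {bag : κ → Set V}
    (hsol : IsSolutionTD G Ws k X T bag)
    {Wi Wj : Set V} (hi : Wi ∈ Ws) (hj : Wj ∈ Ws) {t' : κ}
    (hsub : Wi ∪ Wj ⊆ bag t') :
    IsYesInstance (addCliqueG G (Wi ∪ Wj)) (mergeCliques Ws Wi Wj) k := by
  classical
  obtain ⟨⟨htree, hbs, hmb, heb, hconn⟩, hcov, hwid⟩ := hsol
  refine ⟨κ, T, bag, X, ⟨⟨htree, hbs, hmb, ?_, hconn⟩, ?_, hwid⟩⟩
  · rintro u v ⟨hne, hu, hv, p, hp⟩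
    have hp' : ∀ w ∈ (p : (G ⊔ cliqueOn (Wi ∪ Wj)).Walk u v).support, w = u ∨ w = v ∨ w ∉ X := hp
    rcases sup_walk_cases (p : (G ⊔ cliqueOn (Wi ∪ Wj)).Walk u v) with ⟨q, hq⟩ | ⟨x, y, hx, hy, hxy⟩
    · exact heb ⟨hne, hu, hv, q, by rw [hq]; exact hp⟩
    · obtain ⟨hxyne, hxS, hyS⟩ := hxy
      have hxb : x ∈ bag t' := hsub hxS
      have hyb : y ∈ bag t' := hsub hyS
      have hxX : x ∈ X := hbs t' hxb
      have hyX : y ∈ X := hbs t' hyb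
      have hx' : x = u ∨ x = v := by
        rcases hp' x hx with h | h | h
        · exact Or.inl h
        · exact Or.inr h
        · exact absurd hxX h
      have hy' : y = u ∨ y = v := by
        rcases hp' y hy with h | h | h
        · exact Or.inl h
        · exact Or.inr h
        · exact absurd hyX h
      refine ⟨t', ?_⟩
      rcases hx' with rfl | rfl <;> rcases hy' with rfl | rfl
      · exact absurd rfl hxyne
      · exact ⟨hxb, hyb⟩
      · exact ⟨hyb, hxb⟩
      · exact absurd rfl hxyne
  · intro v hv
    obtain ⟨W, hW, hvW⟩ := hv
    rcases Set.mem_insert_iff.mp hW with rfl | hW'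
    · rcases hvW with h | h
      · exact hcov ⟨Wi, hi, h⟩
      · exact hcov ⟨Wj, hj, h⟩
    · exact hcov ⟨W, hW'.1, hvW⟩

lemma no_two_cliques_in_bag {κ : Type} {G : SimpleGraph V} {Ws : Set (Set V)} {k : ℕ}
    {X : Set V} {T : SimpleGraph κ} {bag : κ → Set V}
    (hmm : MaximallyMerged G Ws k)
    (hsol : IsSolutionTD G Ws k X T bag)
    {Wi Wj : Set V} (hi : Wi ∈ Ws) (hj : Wj ∈ Ws) (hne : Wi ≠ Wj) {t' : κ}
    (hsub : Wi ∪ Wj ⊆ bag t') : False := by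
  have hk : (Wi ∪ Wj).ncard ≤ k + 1 :=
    le_trans (Set.ncard_le_ncard hsub (Set.toFinite _)) (hsol.2.2 t')
  exact hmm Wi hi Wj hj hne hk (merged_solution hsol hi hj hsub)

lemma potential_forget {κ : Type} {G : SimpleGraph V} {Ws : Set (Set V)} {k : ℕ}
    {X : Set V} {T : SimpleGraph κ} {bag : κ → Set V}
    (hsol : IsSolutionTD G Ws k X T bag)
    {W : Set V} (hW : W ∈ Ws) {w : V} (hwW : w ∈ W) (hpriv : w ∉ otherUnion Ws W)
    {s : κ} (hWb : W ⊆ bag s)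
    (hN : ∀ u, (torsoGraph G X).Adj u w → u ∈ bag s) :
    IsPotentialForgetClique G Ws k W := by
  classical
  obtain ⟨⟨htree, hbs, hmb, heb, hconn⟩, hcov, hwid⟩ := hsol
  set bag' : Option κ → Set V :=
    fun o => match o with
      | none => bag s
      | some t => bag t \ {w} with hbag'
  have hbnone : bag' none = bag s := rfl
  have hbsome : ∀ t, bag' (some t) = bag t \ {w} := fun t => rfl
  refine ⟨Option κ, addLeaf T s, bag', X, ⟨⟨?_, ?_, ?_, ?_, ?_⟩, hcov, ?_⟩,
    none, some s, Or.inr (Or.inl ⟨rfl, rfl⟩), fun q hq => addLeaf_adj_none_left hq,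
    hWb, w, ⟨hwW, hpriv⟩, rfl⟩
  · exact addLeaf_isTree htree s
  · intro o
    match o with
    | none => exact hbs s
    | some t => exact fun x hx => hbs t hx.1
  · intro v hv
    by_cases hvw : v = w
    · exact ⟨none, hvw ▸ hWb hwW⟩
    · obtain ⟨t, ht⟩ := hmb v hv
      exact ⟨some t, ht, hvw⟩
  · intro u v hadj
    obtain ⟨t, hut, hvt⟩ := heb hadj
    by_cases huw : u = w
    · subst huw
      exact ⟨none, hWb hwW, hN v hadj.symm⟩
    · by_cases hvw : v = w
      · subst hvw
        exact ⟨none, hN u hadj, hWb hwW⟩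
      · exact ⟨some t, ⟨hut, huw⟩, ⟨hvt, hvw⟩⟩
  · intro v hv
    by_cases hvw : v = w
    · subst hvw
      have hset : {o : Option κ | v ∈ bag' o} = {none} := by
        ext o
        match o with
        | none => simp [hbnone, hWb hwW]
        | some t => simp [hbsome]
      rw [hset]
      rw [connected_iff]
      refine ⟨?_, ⟨⟨none, rfl⟩⟩⟩
      intro x y
      have hxy : x = y := Subtype.ext (x.2.trans y.2.symm)
      exact hxy ▸ Reachable.refl x
    · refine addLeaf_induce_connected (hconn v hv) ?_
      intro o
      match o with
      | none =>
        simp only [Set.mem_setOf_eq, hbnone]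
        constructor
        · intro h; exact Or.inr ⟨by simp, h⟩
        · rintro (⟨a, _, h⟩ | ⟨_, h⟩)
          · exact nomatch h
          · exact h
      | some t =>
        simp only [Set.mem_setOf_eq, hbsome]
        constructor
        · intro h; exact Or.inl ⟨t, h.1, by simp⟩
        · rintro (⟨a, ha, h⟩ | ⟨h, _⟩)
          · obtain rfl := Option.some.inj h
            exact ⟨ha, hvw⟩
          · exact nomatch h
  · intro o
    match o with
    | none => exact hwid s
    | some t => exact le_trans (Set.ncard_le_ncard Set.diff_subset (Set.toFinite _)) (hwid t)

lemma run_lemma {κ : Type} {G : SimpleGraph V} {Ws : Set (Set V)} {k : ℕ}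
    (hI : IsPSTWInstance G Ws k) (hmm : MaximallyMerged G Ws k) (ht : 2 ≤ Ws.ncard)
    {X : Set V} {T : SimpleGraph κ} {bag : κ → Set V}
    (hsol : IsSolutionTD G Ws k X T bag)
    (hmin : ∀ (κ' : Type) (T' : SimpleGraph κ') (bag' : κ' → Set V) (X' : Set V),
      IsSolutionTD G Ws k X' T' bag' → X.ncard ≤ X'.ncard)
    (t0 : κ) :
    ∃ W ∈ Ws, ∃ w : V, w ∈ W ∧ w ∉ otherUnion Ws W ∧ w ∉ bag t0 ∧
      ∃ s : κ, W ⊆ bag s ∧ (∀ u, (torsoGraph G X).Adj u w → u ∈ bag s) := by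
  classical
  have hT := hsol.1.tree
  obtain ⟨W1, hW1, W2, hW2, hne12⟩ := (Set.one_lt_ncard (hI.1)).mp (lt_of_lt_of_le one_lt_two ht)
  have hcovX : ⋃₀ Ws ⊆ X := hsol.2.1
  have hWsubX : ∀ W ∈ Ws, W ⊆ X := fun W hW => le_trans (Set.subset_sUnion_of_mem hW) hcovX
  -- gates
  have gate : ∀ v : V, ∃ gv : κ, v ∈ X →
      (v ∈ bag gv ∧ ∀ t', v ∈ bag t' → T.dist t0 gv ≤ T.dist t0 t') := by
    intro v
    by_cases hv : v ∈ X
    · obtain ⟨t', ht'⟩ := hsol.1.mem_bag v hv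
      have hne' : ((fun t => T.dist t0 t) '' {t | v ∈ bag t}).Nonempty :=
        ⟨T.dist t0 t', Set.mem_image_of_mem _ ht'⟩
      obtain ⟨g, hg, hgd⟩ := Nat.sInf_mem hne'
      have hgd2 : T.dist t0 g = sInf ((fun t => T.dist t0 t) '' {t | v ∈ bag t}) := hgd
      refine ⟨g, fun _ => ⟨hg, fun t'' ht'' => ?_⟩⟩
      rw [hgd2]
      exact Nat.sInf_le ⟨t'', ht'', rfl⟩
    · exact ⟨t0, fun h => absurd h hv⟩
  choose g hg using gate
  set f : V → ℕ := fun v => T.dist t0 (g v) with hf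
  by_cases hall : ∀ v ∈ X, v ∈ bag t0
  · exfalso
    refine no_two_cliques_in_bag hmm hsol hW1 hW2 hne12 (t' := t0) ?_
    intro v hv
    rcases hv with h | h
    · exact hall v (hWsubX W1 hW1 h)
    · exact hall v (hWsubX W2 hW2 h)
  · push_neg at hall
    obtain ⟨vbad, hvbadX, hvbad0⟩ := hall
    have hfbad : f vbad ≠ 0 := by
      intro h0
      have h1 : t0 = g vbad := (hT.isConnected.dist_eq_zero_iff).mp h0
      have hx := (hg vbad hvbadX).1
      rw [← h1] at hx
      exact hvbad0 hx
    obtain ⟨vstar, hvstarX, hmax⟩ :=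
      Set.exists_max_image X f (Set.toFinite X) ⟨vbad, hvbadX⟩
    have hfstar : 1 ≤ f vstar := by
      have := hmax vbad hvbadX
      omega
    have hvstar0 : vstar ∉ bag t0 := by
      intro hmem
      have h1 : f vstar ≤ T.dist t0 t0 := (hg vstar hvstarX).2 t0 hmem
      rw [SimpleGraph.dist_self] at h1
      omega
    set sstar := g vstar with hsstar
    have hvsbag : vstar ∈ bag sstar := (hg vstar hvstarX).1
    have hNbag : ∀ u, (torsoGraph G X).Adj u vstar → u ∈ bag sstar := by
      intro u hadj
      have huX : u ∈ X := hadj.2.1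
      obtain ⟨t1, hut1, hvt1⟩ := hsol.1.edge_bag hadj
      exact gate_mem hT (hsol.1.conn vstar hvstarX) (hsol.1.conn u huX)
        (hg vstar hvstarX).1 (fun a ha => (hg vstar hvstarX).2 a ha)
        (hg u huX).1 (fun b hb => (hg u huX).2 b hb)
        hvt1 hut1 (hmax u huX)
    by_cases hwin : vstar ∈ ⋃₀ Ws
    · obtain ⟨Wi, hWi, hvWi⟩ := hwin
      have hWsubbag : ∀ Wj ∈ Ws, vstar ∈ Wj → Wj ⊆ bag sstar := by
        intro Wj hWj hvWj u hu
        by_cases h : u = vstar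
        · exact h ▸ hvsbag
        · have hadj : G.Adj u vstar := (hI.2.2.2 Wj hWj).1 hu hvWj h
          exact hNbag u (torso_adj_of_adj (hWsubX Wj hWj hu) hvstarX hadj)
      have hpriv : vstar ∉ otherUnion Ws Wi := by
        rintro ⟨Wj, hWj, hvWj⟩
        refine no_two_cliques_in_bag hmm hsol hWi hWj.1 (fun h => hWj.2 h.symm) (t' := sstar) ?_
        exact Set.union_subset (hWsubbag Wi hWi hvWi) (hWsubbag Wj hWj.1 hvWj)
      exact ⟨Wi, hWi, vstar, hvWi, hpriv, hvstar0, sstar, hWsubbag Wi hWi hvWi, hNbag⟩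
    · exfalso
      have hsol' : IsSolutionTD G Ws k (X \ {vstar}) T (fun t => bag t \ {vstar}) := by
        obtain ⟨⟨htree, hbs, hmb, heb, hconn⟩, hcov, hwid⟩ := hsol
        refine ⟨⟨htree, ?_, ?_, ?_, ?_⟩, ?_, ?_⟩
        · exact fun t x hx => ⟨hbs t hx.1, hx.2⟩
        · intro v hv
          obtain ⟨t, ht⟩ := hmb v hv.1
          exact ⟨t, ht, hv.2⟩
        · intro u v hadj
          have huv : u ∈ X \ {vstar} ∧ v ∈ X \ {vstar} := ⟨hadj.2.1, hadj.2.2.1⟩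
          rcases torso_delete hvstarX hadj with h | ⟨h1, h2⟩
          · obtain ⟨t, ht1, ht2⟩ := heb h
            exact ⟨t, ⟨ht1, huv.1.2⟩, ⟨ht2, huv.2.2⟩⟩
          · exact ⟨sstar, ⟨hNbag u h1, huv.1.2⟩, ⟨hNbag v h2, huv.2.2⟩⟩
        · intro v hv
          have hset : {t | v ∈ bag t \ {vstar}} = {t | v ∈ bag t} := by
            ext t
            simp only [Set.mem_setOf_eq, Set.mem_diff, Set.mem_singleton_iff,
              and_iff_left_iff_imp]
            exact fun _ => hv.2
          rw [hset]
          exact hconn v hv.1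
        · intro v hv
          exact ⟨hcov hv, fun h => hwin (h ▸ hv)⟩
        · exact fun t => le_trans (Set.ncard_le_ncard Set.diff_subset (Set.toFinite _)) (hwid t)
      have h1 := hmin κ T _ _ hsol'
      have h2 : (X \ {vstar}).ncard < X.ncard :=
        Set.ncard_lt_ncard (Set.sdiff_singleton_ssubset.mpr hvstarX) (Set.toFinite X)
      omega

end Main


/-- A maximally merged yes-instance of Partitioned Subset Treewidth with at least two terminal
cliques has at least two potential forget-cliques. -/
theorem two_potential_forget_cliques {V : Type} [Fintype V]
    (G : SimpleGraph V) (Ws : Set (Set V)) (k : ℕ)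
    (hI : IsPSTWInstance G Ws k)
    (hyes : IsYesInstance G Ws k)
    (hmm : MaximallyMerged G Ws k)
    (ht : 2 ≤ Ws.ncard) :
    ∃ W1 ∈ Ws, ∃ W2 ∈ Ws, W1 ≠ W2 ∧
      IsPotentialForgetClique G Ws k W1 ∧ IsPotentialForgetClique G Ws k W2 := by
  classical
  set S : Set ℕ := {n | ∃ (κ : Type) (T : SimpleGraph κ) (bag : κ → Set V) (X : Set V),
    IsSolutionTD G Ws k X T bag ∧ X.ncard = n} with hS
  have hSne : S.Nonempty := by
    obtain ⟨κ, T, bag, X, hsol⟩ := hyes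
    exact ⟨X.ncard, κ, T, bag, X, hsol, rfl⟩
  obtain ⟨κ, T, bag, X, hsol, hXcard⟩ := Nat.sInf_mem hSne
  have hmin : ∀ (κ' : Type) (T' : SimpleGraph κ') (bag' : κ' → Set V) (X' : Set V),
      IsSolutionTD G Ws k X' T' bag' → X.ncard ≤ X'.ncard := by
    intro κ' T' bag' X' hsol'
    rw [hXcard]
    exact Nat.sInf_le ⟨κ', T', bag', X', hsol', rfl⟩
  have t0 : κ := Classical.choice hsol.1.tree.isConnected.nonempty
  obtain ⟨Wa, hWa, wa, hwaWa, hpa, _, sa, hWasub, hNa⟩ :=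
    run_lemma hI hmm ht hsol hmin t0
  obtain ⟨Wb, hWb, wb, hwbWb, hpb, hwbsa, sb, hWbsub, hNb⟩ :=
    run_lemma hI hmm ht hsol hmin sa
  have hne : Wa ≠ Wb := fun h => hwbsa (hWasub (h ▸ hwbWb))
  exact ⟨Wa, hWa, Wb, hWb, hne,
    potential_forget hsol hWa hwaWa hpa hWasub hNa,
    potential_forget hsol hWb hwbWb hpb hWbsub hNb⟩
end

section
/- Let I = (G, {W_1, …, W_t}, k) be an instance of Partitioned Subset Treewidth with t ≥ 2 that has no safe separations. Let i ∈ [t] be such that |W_i| ≤ k and there exists j ≠ i with |W_j| ≥ |W_i| and W_j not a superset of W_i, and let v ∈ V(G) \ W_i. Then flp_{I + (W_i, {v})}(W_i ∪ {v}) ≥ flp_I(W_i) + 1. -/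
open SimpleGraph

variable {V ι : Type*}

section AddVertexFlpHelpers

variable {V : Type} [Finite V] {G : SimpleGraph V}

lemma isSep_left' (X Y : Set V) : IsSep G X Y X :=
  fun x _ hx _ p => ⟨x, hx, p.start_mem_support⟩

lemma flowG_le_left' (X Y : Set V) : flowG G X Y ≤ X.ncard :=
  Nat.sInf_le ⟨X, isSep_left' X Y, rfl⟩

lemma le_flowG' (X Y : Set V) {n : ℕ} (h : ∀ S, IsSep G X Y S → n ≤ S.ncard) :
    n ≤ flowG G X Y := by
  refine le_csInf ⟨X.ncard, X, isSep_left' X Y, rfl⟩ ?_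
  rintro m ⟨S, hS, rfl⟩
  exact h S hS

lemma exists_min_sep' (X Y : Set V) : ∃ S, IsSep G X Y S ∧ S.ncard = flowG G X Y := by
  have hne : (Set.ncard '' {S : Set V | IsSep G X Y S}).Nonempty :=
    ⟨X.ncard, X, isSep_left' X Y, rfl⟩
  obtain ⟨S, hS, hc⟩ := Nat.sInf_mem hne
  exact ⟨S, hS, hc⟩

lemma IsSep.symm' {X Y S : Set V} (h : IsSep G X Y S) : IsSep G Y X S := by
  intro y x hy hx p
  obtain ⟨s, hs, hsup⟩ := h hx hy p.reverse
  rw [SimpleGraph.Walk.support_reverse, List.mem_reverse] at hsup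
  exact ⟨s, hs, hsup⟩

lemma flowG_comm' (X Y : Set V) : flowG G X Y = flowG G Y X := by
  have hset : {S : Set V | IsSep G X Y S} = {S : Set V | IsSep G Y X S} :=
    Set.ext fun S => ⟨fun h => h.symm', fun h => h.symm'⟩
  unfold flowG
  rw [hset]

lemma linkedInto_self' (X : Set V) : LinkedInto G X X := by
  refine le_antisymm (flowG_le_left' X X) (le_flowG' X X ?_)
  intro S hS
  refine Set.ncard_le_ncard (fun x hx => ?_) S.toFinite
  obtain ⟨s, hs, hsup⟩ := hS hx hx SimpleGraph.Walk.nil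
  rw [SimpleGraph.Walk.support_nil, List.mem_singleton] at hsup
  subst hsup
  exact hs

lemma walk_stays' {A S B : Set V} (hsep : IsSeparation G A S B) :
    ∀ {x y : V} (p : G.Walk x y), x ∈ A → (∀ w ∈ p.support, w ∉ S) → y ∈ A := by
  intro x y p
  induction p with
  | nil => exact fun h _ => h
  | @cons u v w h q ih =>
    intro hu hS
    have hvmem : v ∈ (SimpleGraph.Walk.cons h q).support := by
      rw [SimpleGraph.Walk.support_cons]
      exact List.mem_cons_of_mem _ q.start_mem_support
    have hvS : v ∉ S := hS v hvmem
    have hvA : v ∈ A := by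
      have huniv : v ∈ A ∪ S ∪ B := hsep.union_eq ▸ Set.mem_univ v
      rcases huniv with (hv | hv) | hv
      · exact hv
      · exact absurd hv hvS
      · exact absurd h (hsep.no_adj hu hv)
    refine ih hvA fun w hw => hS w ?_
    rw [SimpleGraph.Walk.support_cons]
    exact List.mem_cons_of_mem _ hw

lemma isSep_of_separation' {A S B P Q : Set V} (hsep : IsSeparation G A S B)
    (hP : P ⊆ A ∪ S) (hQ : Q ⊆ B ∪ S) : IsSep G P Q S := by
  intro x y hx hy p
  by_contra hc
  push_neg at hc
  have hxA : x ∈ A := by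
    rcases hP hx with h | h
    · exact h
    · exact absurd p.start_mem_support (hc x h)
  have hyA : y ∈ A := walk_stays' hsep p hxA fun w hw hwS => hc w hwS hw
  have hyB : y ∈ B := by
    rcases hQ hy with h | h
    · exact h
    · exact absurd p.end_mem_support (hc y h)
  exact Set.disjoint_left.mp hsep.disjoint_AB hyA hyB

lemma reach_disjoint' (P Z : Set V) : Disjoint (reachG G P Z) Z := by
  rw [Set.disjoint_left]
  rintro v ⟨x, hx, hxZ, p, hp⟩ hvZ
  exact hp v p.end_mem_support hvZ

lemma subset_reach_union' {P Z : Set V} : P ⊆ reachG G P Z ∪ Z := by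
  intro x hx
  by_cases hxZ : x ∈ Z
  · exact Or.inr hxZ
  · refine Or.inl ⟨x, hx, hxZ, SimpleGraph.Walk.nil, ?_⟩
    intro w hw
    rw [SimpleGraph.Walk.support_nil, List.mem_singleton] at hw
    subst hw
    exact hxZ

lemma reach_closed' {P Z : Set V} {a b : V} (ha : a ∈ reachG G P Z) (hab : G.Adj a b)
    (hbZ : b ∉ Z) : b ∈ reachG G P Z := by
  obtain ⟨x, hx, hxZ, p, hp⟩ := ha
  refine ⟨x, hx, hxZ, p.concat hab, ?_⟩
  intro w hw
  rw [SimpleGraph.Walk.support_concat, List.mem_append] at hw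
  rcases hw with hw | hw
  · exact hp w hw
  · rw [List.mem_singleton] at hw
    subst hw
    exact hbZ

lemma reach_inter_target' {P Q Z : Set V} (hZ : IsSep G P Q Z) {q : V} (hq : q ∈ Q) :
    q ∉ reachG G P Z := by
  rintro ⟨x, hx, hxZ, p, hp⟩
  obtain ⟨s, hsZ, hsup⟩ := hZ hx hq p
  exact hp s hsup hsZ

lemma separation_of_sep' {P Q Z : Set V} (hZ : IsSep G P Q Z) :
    IsSeparation G (reachG G P Z) Z (reachG G P Z ∪ Z)ᶜ where
  disjoint_AS := reach_disjoint' P Z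
  disjoint_AB := disjoint_compl_right.mono_left Set.subset_union_left
  disjoint_SB := disjoint_compl_right.mono_left Set.subset_union_right
  union_eq := Set.union_compl_self _
  no_adj := by
    intro a b ha hb hadj
    have hbZ : b ∉ Z := fun h => hb (Or.inr h)
    exact hb (Or.inl (reach_closed' ha hadj hbZ))

lemma linked_of_min_left' [DecidableEq V] {P Q Z : Set V} (hZ : IsSep G P Q Z)
    (hmin : ∀ Z', IsSep G P Q Z' → Z.ncard ≤ Z'.ncard) : LinkedInto G Z P := by
  refine le_antisymm (flowG_le_left' Z P) (le_flowG' Z P ?_)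
  intro Z' hZ'
  refine hmin Z' ?_
  intro x y hx hy p
  obtain ⟨s, hsZ, hsup⟩ := hZ hx hy p
  obtain ⟨z, hz, hzsup⟩ := hZ' hsZ hx ((p.takeUntil s hsup).reverse)
  rw [SimpleGraph.Walk.support_reverse, List.mem_reverse] at hzsup
  exact ⟨z, hz, SimpleGraph.Walk.support_takeUntil_subset p hsup hzsup⟩

lemma linked_of_min_right' [DecidableEq V] {P Q Z : Set V} (hZ : IsSep G P Q Z)
    (hmin : ∀ Z', IsSep G P Q Z' → Z.ncard ≤ Z'.ncard) : LinkedInto G Z Q := by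
  refine le_antisymm (flowG_le_left' Z Q) (le_flowG' Z Q ?_)
  intro Z' hZ'
  refine hmin Z' ?_
  intro x y hx hy p
  obtain ⟨s, hsZ, hsup⟩ := hZ hx hy p
  obtain ⟨z, hz, hzsup⟩ := hZ' hsZ hy (p.dropUntil s hsup)
  exact ⟨z, hz, SimpleGraph.Walk.support_dropUntil_subset p hsup hzsup⟩

lemma safe_of_min_sep' [DecidableEq V] {Ws : Set (Set V)} {P Q Z : Set V}
    (hP : P ∈ Ws) (hQw : Q ∈ Ws) (hZ : IsSep G P Q Z)
    (hmin : ∀ Z', IsSep G P Q Z' → Z.ncard ≤ Z'.ncard)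
    (hPZ : ¬ P ⊆ Z) (hQZ : ¬ Q ⊆ Z) :
    IsSafeSeparation G Ws (reachG G P Z) Z (reachG G P Z ∪ Z)ᶜ := by
  have hPsub : P ⊆ reachG G P Z ∪ Z := subset_reach_union'
  have hQsub : Q ⊆ (reachG G P Z ∪ Z)ᶜ ∪ Z := by
    intro y hy
    by_cases hyZ : y ∈ Z
    · exact Or.inr hyZ
    · exact Or.inl fun hmem => hmem.elim (reach_inter_target' hZ hy) hyZ
  refine ⟨separation_of_sep' hZ, ?_, ?_, P, hP, Q, hQw, ?_, ?_⟩
  · obtain ⟨x, hx, hxZ⟩ := Set.not_subset.mp hPZ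
    exact ⟨x, (hPsub hx).resolve_right hxZ⟩
  · obtain ⟨y, hy, hyZ⟩ := Set.not_subset.mp hQZ
    exact ⟨y, (hQsub hy).resolve_right hyZ⟩
  · rw [Set.inter_eq_right.mpr hPsub]
    exact linked_of_min_left' hZ hmin
  · rw [Set.inter_eq_right.mpr hQsub]
    exact linked_of_min_right' hZ hmin

lemma stepA' [DecidableEq V] {Ws : Set (Set V)}
    (hnosafe : ∀ A S B : Set V, ¬ IsSafeSeparation G Ws A S B)
    {Wi Wj : Set V} (hWi : Wi ∈ Ws) (hWjWs : Wj ∈ Ws)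
    (hcard : Wi.ncard ≤ Wj.ncard)
    {A S B : Set V} (hsep : IsSeparation G A S B)
    (hWiAS : Wi ⊆ A ∪ S) (hWjBS : Wj ⊆ B ∪ S)
    (hB : B.Nonempty) (hScard : S.ncard ≤ Wi.ncard) : A = ∅ := by
  by_contra hA
  obtain ⟨a, ha⟩ := Set.nonempty_iff_ne_empty.mpr hA
  have hSsep : IsSep G Wi Wj S := isSep_of_separation' hsep hWiAS hWjBS
  have hFle : flowG G Wi Wj ≤ S.ncard := Nat.sInf_le ⟨S, hSsep, rfl⟩
  have hFge : Wi.ncard ≤ flowG G Wi Wj := by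
    by_contra hF
    push_neg at hF
    obtain ⟨Z, hZsep, hZcard⟩ := exists_min_sep' Wi Wj
    have hminZ : ∀ Z', IsSep G Wi Wj Z' → Z.ncard ≤ Z'.ncard := fun Z' h =>
      hZcard ▸ Nat.sInf_le ⟨Z', h, rfl⟩
    have hZlt : Z.ncard < Wi.ncard := hZcard ▸ hF
    have hWiZ : ¬ Wi ⊆ Z := fun h =>
      absurd (Set.ncard_le_ncard h Z.toFinite) (Nat.not_le.mpr hZlt)
    have hWjZ : ¬ Wj ⊆ Z := fun h =>
      absurd (Set.ncard_le_ncard h Z.toFinite) (Nat.not_le.mpr (lt_of_lt_of_le hZlt hcard))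
    exact hnosafe _ _ _ (safe_of_min_sep' hWi hWjWs hZsep hminZ hWiZ hWjZ)
  have hSWi : S.ncard = Wi.ncard := le_antisymm hScard (le_trans hFge hFle)
  have hFS : flowG G Wi Wj = S.ncard := le_antisymm hFle (hSWi ▸ hFge)
  have hminS : ∀ Z', IsSep G Wi Wj Z' → S.ncard ≤ Z'.ncard := fun Z' h =>
    hFS ▸ Nat.sInf_le ⟨Z', h, rfl⟩
  by_cases hWiS : Wi ⊆ S
  · have hSeq : Wi = S := Set.eq_of_subset_of_ncard_le hWiS hScard S.toFinite
    subst hSeq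
    refine hnosafe A Wi B ⟨hsep, ⟨a, ha⟩, hB, Wi, hWi, Wj, hWjWs, ?_, ?_⟩
    · rw [Set.inter_eq_right.mpr (Set.subset_union_right)]
      exact linkedInto_self' Wi
    · rw [Set.inter_eq_right.mpr hWjBS]
      exact hFS
  · by_cases hWjS : Wj ⊆ S
    · have hWjle : Wj.ncard ≤ S.ncard := Set.ncard_le_ncard hWjS S.toFinite
      have hSeq : Wj = S :=
        Set.eq_of_subset_of_ncard_le hWjS (hSWi ▸ hcard) S.toFinite
      subst hSeq
      refine hnosafe A Wj B ⟨hsep, ⟨a, ha⟩, hB, Wi, hWi, Wj, hWjWs, ?_, ?_⟩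
      · rw [Set.inter_eq_right.mpr hWiAS]
        rw [LinkedInto, flowG_comm']
        exact hFS
      · rw [Set.inter_eq_right.mpr (Set.subset_union_right)]
        exact linkedInto_self' Wj
    · exact hnosafe _ _ _ (safe_of_min_sep' hWi hWjWs hSsep hminS hWiS hWjS)

end AddVertexFlpHelpers

/-- Let `I = (G, Ws, k)` be an instance with at least two terminal cliques and no safe
separations, let `W_i` be a terminal clique with `|W_i| ≤ k` such that some other terminal
clique `W_j` has `|W_j| ≥ |W_i|` and is not a superset of `W_i`, and let `v ∉ W_i`. Then
`flp_{I + (W_i, {v})}(W_i ∪ {v}) ≥ flp_I(W_i) + 1`. -/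
theorem add_vertex_flp {V : Type} [Fintype V]
    (G : SimpleGraph V) (Ws : Set (Set V)) (k : ℕ)
    (hI : IsPSTWInstance G Ws k)
    (ht : 2 ≤ Ws.ncard)
    (hnosafe : ∀ A S B : Set V, ¬ IsSafeSeparation G Ws A S B)
    (Wi : Set V) (hWi : Wi ∈ Ws) (hWik : Wi.ncard ≤ k)
    (hWj : ∃ Wj ∈ Ws, Wj ≠ Wi ∧ Wi.ncard ≤ Wj.ncard ∧ ¬ Wi ⊆ Wj)
    (v : V) (hv : v ∉ Wi) :
    flpInst G Ws Wi + 1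
      ≤ flpInst (addCliqueG G (Wi ∪ {v})) (replaceClique Ws Wi (Wi ∪ {v}))
          (Wi ∪ {v}) := by
  classical
  obtain ⟨Wj, hWjWs, hWjne, hWjcard, hWjnsub⟩ := hWj
  have hWine : Wi ≠ Set.univ := fun h => hv (h ▸ Set.mem_univ v)
  have hsep0 : IsSeparation G ∅ Wi Wiᶜ := by
    refine ⟨?_, ?_, ?_, ?_, ?_⟩
    · exact Set.empty_disjoint Wi
    · exact Set.empty_disjoint Wiᶜ
    · exact disjoint_compl_right
    · simp
    · exact fun a _ ha _ => absurd ha (Set.notMem_empty a)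
  have hfle : flpInst G Ws Wi ≤ Wi.ncard := by
    unfold flpInst flpG
    rw [if_neg hWine]
    refine Nat.sInf_le ⟨∅, Wi, Wiᶜ, hsep0, ?_, ?_, ⟨v, hv⟩, rfl⟩
    · simp
    · rw [Set.compl_union_self]
      exact Set.subset_univ _
  set f := flpInst G Ws Wi with hf
  set X : Set V := Wi ∪ {v} with hX
  have hXcard : X.ncard = Wi.ncard + 1 := by
    rw [hX, Set.union_singleton, Set.ncard_insert_of_notMem hv Wi.toFinite]
  have hWiX : Wi ⊆ X := Set.subset_union_left
  by_cases hXu : X = Set.univ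
  · unfold flpInst flpG
    rw [if_pos hXu, hXcard]
    omega
  · unfold flpInst flpG
    rw [if_neg hXu]
    have hsepX : IsSeparation (addCliqueG G X) ∅ X Xᶜ := by
      refine ⟨?_, ?_, ?_, ?_, ?_⟩
      · exact Set.empty_disjoint X
      · exact Set.empty_disjoint Xᶜ
      · exact disjoint_compl_right
      · simp
      · exact fun a _ ha _ => absurd ha (Set.notMem_empty a)
    refine le_csInf ⟨X.ncard, ∅, X, Xᶜ, hsepX, ?_, ?_, Set.nonempty_compl.mpr hXu, rfl⟩ ?_
    · simp
    · rw [Set.compl_union_self]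
      exact Set.subset_univ _
    rintro n ⟨A, S, B, hsep', hXAS, hYBS, hBne, rfl⟩
    by_contra hlt
    push_neg at hlt
    have hSf : S.ncard ≤ f := by omega
    have hsepG : IsSeparation G A S B :=
      ⟨hsep'.disjoint_AS, hsep'.disjoint_AB, hsep'.disjoint_SB, hsep'.union_eq,
        fun a b ha hb hadj => hsep'.no_adj ha hb ((SimpleGraph.sup_adj G (cliqueOn X) a b).mpr (Or.inl hadj))⟩
    have hWiAS : Wi ⊆ A ∪ S := hWiX.trans hXAS
    have hWjX : Wj ≠ X := fun h => hWjnsub (by rw [h]; exact hWiX)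
    have hWjBS : Wj ⊆ B ∪ S := by
      refine subset_trans ?_ hYBS
      refine Set.subset_sUnion_of_mem ?_
      refine ⟨Set.mem_insert_of_mem _ ⟨hWjWs, ?_⟩, ?_⟩
      · rw [Set.mem_singleton_iff]
        exact hWjne
      · rw [Set.mem_singleton_iff]
        exact hWjX
    have hA : A = ∅ :=
      stepA' hnosafe hWi hWjWs hWjcard hsepG hWiAS hWjBS hBne (hSf.trans hfle)
    rw [hA, Set.empty_union] at hXAS
    have := Set.ncard_le_ncard hXAS S.toFinite
    omega
end
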